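/- Let N > 2 be an integer, let μ be a measure on a measurable space X, let u, g : X → ℝ be measurable and nonnegative, and let C > 0. Assume that (i) μ({x : u(x) ≥ l}) ≤ C · l^{−N/(N−2)} for every real l ≥ 1, and (ii) μ({x : g(x) ≥ t and u(x) ≤ l}) ≤ C · l / t² for all reals t ≥ 1 and l ≥ 1. Then μ({x : g(x) ≥ t}) ≤ 2C · t^{−N/(N−1)} for every t ≥ 1. -/

import Mathlib

open MeasureTheory

/-- Level-set interpolation: from decay of order `N/(N-2)` for `u` and the truncated
energy bound for `g`, one deduces decay of order `N/(N-1)` for `g`. -/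
theorem levelset_interpolation
    {X : Type*} [MeasurableSpace X] (N : ℕ) (hN : 2 < N) (μ : Measure X)
    (u g : X → ℝ) (hu : Measurable u) (hg : Measurable g)
    (hu0 : ∀ x, 0 ≤ u x) (hg0 : ∀ x, 0 ≤ g x) (C : ℝ) (hC : 0 < C)
    (h1 : ∀ l : ℝ, 1 ≤ l →
      μ {x | l ≤ u x} ≤ ENNReal.ofReal (C * l ^ (-(N : ℝ) / ((N : ℝ) - 2))))
    (h2 : ∀ t l : ℝ, 1 ≤ t → 1 ≤ l →
      μ {x | t ≤ g x ∧ u x ≤ l} ≤ ENNReal.ofReal (C * l / t ^ 2)) :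
    ∀ t : ℝ, 1 ≤ t →
      μ {x | t ≤ g x} ≤ ENNReal.ofReal (2 * C * t ^ (-(N : ℝ) / ((N : ℝ) - 1))) := by
  intro t ht
  have hN2 : (0:ℝ) < (N:ℝ) - 2 := by
    have : (2:ℝ) < N := by exact_mod_cast hN
    linarith
  have hN1 : (0:ℝ) < (N:ℝ) - 1 := by linarith
  set a : ℝ := ((N:ℝ) - 2) / ((N:ℝ) - 1) with ha
  have ha0 : 0 ≤ a := by positivity
  have ht0 : (0:ℝ) < t := lt_of_lt_of_le one_pos ht
  set l : ℝ := t ^ a with hl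
  have hl1 : 1 ≤ l := Real.one_le_rpow ht ha0
  have hl0 : 0 < l := lt_of_lt_of_le one_pos hl1
  have hsub : {x | t ≤ g x} ⊆ {x | t ≤ g x ∧ u x ≤ l} ∪ {x | l ≤ u x} := by
    intro x hx
    by_cases h : u x ≤ l
    · exact Or.inl ⟨hx, h⟩
    · exact Or.inr (le_of_lt (not_le.mp h))
  have e1 : C * l / t ^ 2 = C * t ^ (-(N:ℝ)/((N:ℝ)-1)) := by
    have : l / t ^ 2 = t ^ (-(N:ℝ)/((N:ℝ)-1)) := by
      rw [hl, ← Real.rpow_natCast t 2, ← Real.rpow_sub ht0]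
      congr 1
      push_cast
      rw [ha]
      field_simp
      ring
    rw [mul_div_assoc, this]
  have e2 : C * l ^ (-(N : ℝ) / ((N : ℝ) - 2)) = C * t ^ (-(N:ℝ)/((N:ℝ)-1)) := by
    rw [hl, ← Real.rpow_mul ht0.le]
    congr 2
    rw [ha]
    field_simp
  calc μ {x | t ≤ g x} ≤ μ ({x | t ≤ g x ∧ u x ≤ l} ∪ {x | l ≤ u x}) := measure_mono hsub
    _ ≤ μ {x | t ≤ g x ∧ u x ≤ l} + μ {x | l ≤ u x} := measure_union_le _ _
    _ ≤ ENNReal.ofReal (C * l / t ^ 2) + ENNReal.ofReal (C * l ^ (-(N : ℝ) / ((N : ℝ) - 2))) :=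
        add_le_add (h2 t l ht hl1) (h1 l hl1)
    _ = ENNReal.ofReal (2 * C * t ^ (-(N : ℝ) / ((N : ℝ) - 1))) := by
        rw [← ENNReal.ofReal_add (by positivity) (by positivity), e1, e2]
        ring_nf
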